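/- arXiv:1911.02071 — 4 statements merged into one kernel-verified Lean document; each statement's English description precedes it below -/
import Mathlib

section
/- Let H be a finite cyclic subgroup of SO(3) of order n such that for every h ∈ H the square of its trace is an integer. Then n ∈ {1, 2, 3, 4, 6}. -/
open Matrix Polynomial

lemma sqz3 {a b : ℝ} (hab : a ^ 2 + b ^ 2 = 0) : a = 0 ∧ b = 0 := by
  have ha : a ^ 2 = 0 := by nlinarith [sq_nonneg a, sq_nonneg b]
  have hb : b ^ 2 = 0 := by nlinarith [sq_nonneg a, sq_nonneg b]
  exact ⟨by simpa using pow_eq_zero_iff (n := 2) (by norm_num) |>.mp ha,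
    by simpa using pow_eq_zero_iff (n := 2) (by norm_num) |>.mp hb⟩

lemma row_norm3 (Q : Matrix (Fin 3) (Fin 3) ℝ) (h : Q * Qᵀ = 1) (i : Fin 3) :
    Q i 0 ^ 2 + Q i 1 ^ 2 + Q i 2 ^ 2 = 1 := by
  have := congrFun (congrFun h i) i
  simpa [mul_apply, Fin.sum_univ_three, Matrix.one_apply, sq] using this

lemma diag_le3 (Q : Matrix (Fin 3) (Fin 3) ℝ) (h : Q * Qᵀ = 1) (i : Fin 3) :
    -1 ≤ Q i i ∧ Q i i ≤ 1 := by
  have h0 := row_norm3 Q h 0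
  have h1 := row_norm3 Q h 1
  have h2 := row_norm3 Q h 2
  have e : i = 0 ∨ i = 1 ∨ i = 2 := by omega
  rcases e with rfl | rfl | rfl
  · exact ⟨by nlinarith [sq_nonneg (Q 0 1), sq_nonneg (Q 0 2), sq_nonneg (Q 0 0 + 1)],
      by nlinarith [sq_nonneg (Q 0 1), sq_nonneg (Q 0 2), sq_nonneg (Q 0 0 - 1)]⟩
  · exact ⟨by nlinarith [sq_nonneg (Q 1 0), sq_nonneg (Q 1 2), sq_nonneg (Q 1 1 + 1)],
      by nlinarith [sq_nonneg (Q 1 0), sq_nonneg (Q 1 2), sq_nonneg (Q 1 1 - 1)]⟩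
  · exact ⟨by nlinarith [sq_nonneg (Q 2 0), sq_nonneg (Q 2 1), sq_nonneg (Q 2 2 + 1)],
      by nlinarith [sq_nonneg (Q 2 0), sq_nonneg (Q 2 1), sq_nonneg (Q 2 2 - 1)]⟩

lemma trace_bound3 (Q : Matrix (Fin 3) (Fin 3) ℝ) (h : Q * Qᵀ = 1) :
    -3 ≤ Q.trace ∧ Q.trace ≤ 3 := by
  have h0 := diag_le3 Q h 0
  have h1 := diag_le3 Q h 1
  have h2 := diag_le3 Q h 2
  rw [trace_fin_three]
  exact ⟨by linarith [h0.1, h1.1, h2.1], by linarith [h0.2, h1.2, h2.2]⟩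

lemma eq_one_of_trace_three3 (Q : Matrix (Fin 3) (Fin 3) ℝ) (h : Q * Qᵀ = 1)
    (ht : Q.trace = 3) : Q = 1 := by
  have h0 := row_norm3 Q h 0
  have h1 := row_norm3 Q h 1
  have h2 := row_norm3 Q h 2
  have b0 := diag_le3 Q h 0
  have b1 := diag_le3 Q h 1
  have b2 := diag_le3 Q h 2
  rw [trace_fin_three] at ht
  have d0 : Q 0 0 = 1 := by linarith [b0.2, b1.2, b2.2]
  have d1 : Q 1 1 = 1 := by linarith [b0.2, b1.2, b2.2]
  have d2 : Q 2 2 = 1 := by linarith [b0.2, b1.2, b2.2]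
  have s0 : Q 0 1 ^ 2 + Q 0 2 ^ 2 = 0 := by nlinarith
  have s1 : Q 1 0 ^ 2 + Q 1 2 ^ 2 = 0 := by nlinarith
  have s2 : Q 2 0 ^ 2 + Q 2 1 ^ 2 = 0 := by nlinarith
  obtain ⟨z01, z02⟩ := sqz3 s0
  obtain ⟨z10, z12⟩ := sqz3 s1
  obtain ⟨z20, z21⟩ := sqz3 s2
  ext i j
  fin_cases i <;> fin_cases j <;>
    simp_all [Matrix.one_apply]

lemma adj3 (M : Matrix (Fin 3) (Fin 3) ℝ) :
    adjugate M = M * M - M.trace • M + (adjugate M).trace • 1 := by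
  ext i j
  fin_cases i <;> fin_cases j <;>
    simp [adjugate_fin_three, trace_fin_three, mul_apply, Fin.sum_univ_three, Matrix.one_apply] <;>
    ring

lemma so3_facts (Q : Matrix (Fin 3) (Fin 3) ℝ) (h2 : Qᵀ * Q = 1)
    (hd : Q.det = 1) :
    Q * Q * Q = Q.trace • (Q * Q) - Q.trace • Q + 1 ∧
    (Q * Q).trace = Q.trace ^ 2 - 2 * Q.trace := by
  have hadj : adjugate Q = Qᵀ := by
    calc adjugate Q = (Qᵀ * Q) * adjugate Q := by rw [h2, one_mul]
    _ = Qᵀ * (Q * adjugate Q) := by rw [mul_assoc]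
    _ = Qᵀ := by rw [mul_adjugate, hd, one_smul, mul_one]
  have key := adj3 Q
  rw [hadj, trace_transpose] at key
  constructor
  · have e2 : (1 : Matrix (Fin 3) (Fin 3) ℝ)
        = Q * Q * Q - Q.trace • (Q * Q) + Q.trace • Q := by
      calc (1 : Matrix (Fin 3) (Fin 3) ℝ) = Qᵀ * Q := h2.symm
      _ = (Q * Q - Q.trace • Q + Q.trace • 1) * Q := by rw [← key]
      _ = Q * Q * Q - Q.trace • (Q * Q) + Q.trace • Q := by
          simp only [sub_mul, add_mul, smul_mul_assoc, one_mul]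
    rw [e2]; module
  · have := congrArg Matrix.trace key
    simp only [trace_sub, trace_add, trace_smul, trace_one, Fintype.card_fin,
      smul_eq_mul, trace_transpose] at this
    push_cast at this
    nlinarith [this]

lemma pow_eq_one_of_ch (G : Matrix (Fin 3) (Fin 3) ℝ) (c : ℝ)
    (hCH : G * G * G = c • (G * G) - c • G + 1) (k : ℕ) (q : ℝ[X])
    (hq : (X ^ 3 - C c * X ^ 2 + C c * X - 1) * q = X ^ k - 1) : G ^ k = 1 := by
  have h3 : G ^ 3 = G * G * G := by rw [pow_succ, pow_two]
  have hch : aeval G (X ^ 3 - C c * X ^ 2 + C c * X - 1) = 0 := by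
    simp only [map_sub, map_add, _root_.map_mul, map_pow, _root_.map_one, aeval_X, aeval_C]
    simp only [Algebra.algebraMap_eq_smul_one, smul_mul_assoc, one_mul]
    rw [h3, pow_two, hCH]
    abel
  have h0 : aeval G ((X : ℝ[X]) ^ k - 1) = 0 := by rw [← hq, _root_.map_mul, hch, zero_mul]
  have h1 : G ^ k - 1 = 0 := by simpa using h0
  rwa [sub_eq_zero] at h1

theorem stmt_3 (n : ℕ) (H : Subgroup (Matrix.orthogonalGroup (Fin 3) ℝ))
    (hdet : ∀ A ∈ H, (A : Matrix (Fin 3) (Fin 3) ℝ).det = 1)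
    (hfin : Finite H) (hcyc : IsCyclic H) (hcard : Nat.card H = n)
    (htr : ∀ A ∈ H, ∃ m : ℤ, ((A : Matrix (Fin 3) (Fin 3) ℝ).trace) ^ 2 = m) :
    n ∈ ({1, 2, 3, 4, 6} : Set ℕ) := by
  obtain ⟨g, hg⟩ := hcyc.exists_generator
  have hord : orderOf g = n := by rw [orderOf_eq_card_of_forall_mem_zpowers hg, hcard]
  have hn1 : 1 ≤ n := by
    rw [← hcard]
    exact Nat.card_pos
  set G : Matrix (Fin 3) (Fin 3) ℝ :=
    ((g : Matrix.orthogonalGroup (Fin 3) ℝ) : Matrix (Fin 3) (Fin 3) ℝ) with hG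
  have horth1 : Gᵀ * G = 1 := by
    have := (g : Matrix.orthogonalGroup (Fin 3) ℝ).2.1
    rwa [star_eq_conjTranspose, conjTranspose_eq_transpose_of_trivial] at this
  have horth2 : G * Gᵀ = 1 := by
    have := (g : Matrix.orthogonalGroup (Fin 3) ℝ).2.2
    rwa [star_eq_conjTranspose, conjTranspose_eq_transpose_of_trivial] at this
  have hdetG : G.det = 1 := hdet _ g.2
  obtain ⟨hCH, htr2⟩ := so3_facts G horth1 hdetG
  set t : ℝ := G.trace with hGt
  -- the matrix of g^2 and its orthogonality
  have hg2m : (((g ^ 2 : H) : Matrix.orthogonalGroup (Fin 3) ℝ) : Matrix (Fin 3) (Fin 3) ℝ)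
      = G * G := by
    push_cast
    rw [pow_two]
  have horthsq : (G * G) * (G * G)ᵀ = 1 := by
    have := ((g ^ 2 : H) : Matrix.orthogonalGroup (Fin 3) ℝ).2.2
    rwa [star_eq_conjTranspose, conjTranspose_eq_transpose_of_trivial, hg2m] at this
  -- integrality
  obtain ⟨m1, hm1⟩ := htr _ g.2
  obtain ⟨m2, hm2⟩ := htr _ (g ^ 2 : H).2
  rw [hg2m] at hm2
  rw [← hGt] at hm1
  rw [htr2] at hm2
  -- bounds
  have tb := trace_bound3 G horth2
  have tb2 := trace_bound3 (G * G) horthsq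
  rw [htr2] at tb2
  -- five possible traces
  have htfive : t = -1 ∨ t = 0 ∨ t = 1 ∨ t = 2 ∨ t = 3 := by
    rcases eq_or_ne m1 0 with hz | hz
    · right; left
      have : t ^ 2 = 0 := by rw [hm1, hz]; norm_num
      simpa using pow_eq_zero_iff (n := 2) (by norm_num) |>.mp this
    · have hm1nn : (0 : ℝ) ≤ (m1 : ℝ) := by rw [← hm1]; positivity
      have hm1pos : 1 ≤ m1 := by
        have : (0 : ℤ) ≤ m1 := by exact_mod_cast hm1nn
        omega
      have ht3 : t ≤ 3 := tb.2
      have htm1 : -1 ≤ t := by nlinarith [tb2.2]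
      have hm19 : m1 ≤ 9 := by
        have : (m1 : ℝ) ≤ 9 := by rw [← hm1]; nlinarith
        exact_mod_cast this
      have hm2nn : 0 ≤ m2 := by
        have : (0 : ℝ) ≤ (m2 : ℝ) := by rw [← hm2]; positivity
        exact_mod_cast this
      have hm29 : m2 ≤ 9 := by
        have : (m2 : ℝ) ≤ 9 := by rw [← hm2]; nlinarith [tb2.1, tb2.2]
        exact_mod_cast this
      have hkey : 4 * (m1 : ℝ) * t = (m1 : ℝ) ^ 2 + 4 * (m1 : ℝ) - (m2 : ℝ) := by
        linear_combination (t ^ 2 + (m1 : ℝ) - 4 * t + 4) * hm1 - hm2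
      have hkeyint : ((m1 : ℝ) ^ 2 + 4 * (m1 : ℝ) - (m2 : ℝ)) ^ 2 = 16 * (m1 : ℝ) ^ 3 := by
        rw [← hkey]
        linear_combination (16 * (m1 : ℝ) ^ 2) * hm1
      have hZ : (m1 ^ 2 + 4 * m1 - m2) ^ 2 = 16 * m1 ^ 3 := by exact_mod_cast hkeyint
      have hsols : (m1 = 1 ∧ m2 = 1) ∨ (m1 = 1 ∧ m2 = 9) ∨ (m1 = 4 ∧ m2 = 0)
          ∨ (m1 = 9 ∧ m2 = 9) := by
        interval_cases m1 <;> interval_cases m2 <;> omega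
      rcases hsols with ⟨ha, hb⟩ | ⟨ha, hb⟩ | ⟨ha, hb⟩ | ⟨ha, hb⟩ <;>
        rw [ha, hb] at hkey <;> push_cast at hkey
      · right; right; left; linarith
      · left; linarith
      · right; right; right; left; linarith
      · right; right; right; right; linarith
  -- helper to pass from a matrix power identity to divisibility of n
  have key : ∀ k : ℕ, G ^ k = 1 → n ∣ k := by
    intro k hk
    have hgk : (g : H) ^ k = 1 := by
      apply Subtype.ext
      apply Subtype.ext
      show (((g ^ k : H) : Matrix.orthogonalGroup (Fin 3) ℝ) : Matrix (Fin 3) (Fin 3) ℝ) = _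
      push_cast
      rw [hk]
    rw [← hord]
    exact orderOf_dvd_of_pow_eq_one hgk
  simp only [Set.mem_insert_iff, Set.mem_singleton_iff]
  rcases htfive with ht | ht | ht | ht | ht
  · -- t = -1 : G² has trace 3, so G² = 1, n ∣ 2
    have h3 : (G * G).trace = 3 := by rw [htr2, ht]; norm_num
    have hsq : G * G = 1 := eq_one_of_trace_three3 _ horthsq h3
    have hdvd : n ∣ 2 := key 2 (by rw [pow_two, hsq])
    have := Nat.le_of_dvd (by norm_num) hdvd
    interval_cases n <;> revert hdvd <;> decide
  · -- t = 0 : G³ = 1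
    have hdvd : n ∣ 3 := by
      apply key 3
      apply pow_eq_one_of_ch G 0 (by rw [ht] at hCH; simpa using hCH) 3 1
      rw [Polynomial.C_0]; ring
    have := Nat.le_of_dvd (by norm_num) hdvd
    interval_cases n <;> revert hdvd <;> decide
  · -- t = 1 : G⁴ = 1
    have hdvd : n ∣ 4 := by
      apply key 4
      apply pow_eq_one_of_ch G 1 (by rw [ht] at hCH; exact hCH) 4 (X + 1)
      rw [Polynomial.C_1]; ring
    have := Nat.le_of_dvd (by norm_num) hdvd
    interval_cases n <;> revert hdvd <;> decide
  · -- t = 2 : G⁶ = 1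
    have hdvd : n ∣ 6 := by
      apply key 6
      apply pow_eq_one_of_ch G 2 (by rw [ht] at hCH; exact hCH) 6
        (X ^ 3 + 2 * X ^ 2 + 2 * X + 1)
      rw [map_ofNat]; ring
    have := Nat.le_of_dvd (by norm_num) hdvd
    interval_cases n <;> revert hdvd <;> decide
  · -- t = 3 : G = 1, n = 1
    have hone : G = 1 := eq_one_of_trace_three3 G horth2 ht
    have hdvd : n ∣ 1 := key 1 (by rwa [pow_one])
    left
    exact Nat.eq_one_of_dvd_one hdvd
end

section
/- Up to conjugacy, the wreath product C₂ ≀ S₃ contains exactly one subgroup isomorphic to the cyclic group C₆, namely the subgroup generated by the product abc of the three sign generators together with a 3-cycle s. -/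
/-- The permutation action of `S₃` on `(C₂)³` by permuting the coordinates. -/
def permAction : Equiv.Perm (Fin 3) →* MulAut (Fin 3 → Multiplicative (ZMod 2)) where
  toFun σ := MulEquiv.arrowCongr σ (MulEquiv.refl (Multiplicative (ZMod 2)))
  map_one' := by ext x n; rfl
  map_mul' σ τ := by ext x n; rfl

/-- The wreath product `C₂ ≀ S₃ = (C₂)³ ⋊ S₃`. -/
abbrev WreathC2S3 : Type :=
  SemidirectProduct (Fin 3 → Multiplicative (ZMod 2)) (Equiv.Perm (Fin 3)) permAction

/-- The element `abc·s`: the product of all three sign generators with a 3-cycle. -/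
noncomputable def abcs : WreathC2S3 :=
  SemidirectProduct.inl (fun _ => Multiplicative.ofAdd (1 : ZMod 2)) *
    SemidirectProduct.inr (finRotate 3)

def wEquiv : WreathC2S3 ≃ (Fin 3 → Multiplicative (ZMod 2)) × Equiv.Perm (Fin 3) where
  toFun g := (g.left, g.right)
  invFun p := ⟨p.1, p.2⟩
  left_inv _ := rfl
  right_inv _ := rfl

instance : Fintype WreathC2S3 := Fintype.ofEquiv _ wEquiv.symm
instance : DecidableEq WreathC2S3 := wEquiv.decidableEq

/-- computable copy of `abcs` -/
def abcs' : WreathC2S3 :=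
  SemidirectProduct.inl (fun _ => Multiplicative.ofAdd (1 : ZMod 2)) *
    SemidirectProduct.inr (finRotate 3)

lemma abcs_eq : abcs = abcs' := rfl

set_option maxRecDepth 10000 in
lemma key : ∀ g : WreathC2S3, g^6 = 1 → g^2 ≠ 1 → g^3 ≠ 1 →
    ∃ x : WreathC2S3, x * abcs' * x⁻¹ = g ∨ x * abcs'⁻¹ * x⁻¹ = g := by decide

lemma ord6 {G : Type*} [Group G] {g : G} (h6 : g ^ 6 = 1) (h2 : g ^ 2 ≠ 1)
    (h3 : g ^ 3 ≠ 1) : orderOf g = 6 := by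
  have hd : orderOf g ∣ 6 := orderOf_dvd_of_pow_eq_one h6
  have h2' : ¬ orderOf g ∣ 2 := fun h => h2 (orderOf_dvd_iff_pow_eq_one.mp h)
  have h3' : ¬ orderOf g ∣ 3 := fun h => h3 (orderOf_dvd_iff_pow_eq_one.mp h)
  have hle : orderOf g ≤ 6 := Nat.le_of_dvd (by norm_num) hd
  have hpos : 0 < orderOf g := Nat.pos_of_ne_zero fun h => by simp [h] at hd
  interval_cases h : orderOf g <;> omega

lemma abcs_order : orderOf abcs = 6 := by
  refine ord6 ?_ ?_ ?_ <;> rw [abcs_eq] <;> decide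

theorem stmt_7 :
    orderOf abcs = 6 ∧
      ∀ H : Subgroup WreathC2S3, IsCyclic H → Nat.card H = 6 →
        ∃ x : WreathC2S3,
          H = Subgroup.map (MulAut.conj x).toMonoidHom (Subgroup.zpowers abcs) := by
  refine ⟨abcs_order, ?_⟩
  intro H hc hcard
  obtain ⟨g, hg⟩ := hc.exists_generator
  -- H = zpowers ↑g
  have hH : H = Subgroup.zpowers (g : WreathC2S3) := by
    have : Subgroup.zpowers g = (⊤ : Subgroup H) := by
      ext y; simpa using hg y
    calc H = Subgroup.map H.subtype ⊤ := by
            rw [← MonoidHom.range_eq_map, Subgroup.subtype_range]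
      _ = Subgroup.map H.subtype (Subgroup.zpowers g) := by rw [this]
      _ = Subgroup.zpowers (g : WreathC2S3) := by
            rw [MonoidHom.map_zpowers]; rfl
  have hog : orderOf (g : WreathC2S3) = 6 := by
    have h1 : orderOf g = 6 := by
      rw [orderOf_eq_card_of_forall_mem_zpowers hg]
      exact hcard
    have h2 : orderOf (H.subtype g) = orderOf g :=
      orderOf_injective H.subtype Subtype.coe_injective g
    rw [← h1, ← h2]; rfl
  set w : WreathC2S3 := (g : WreathC2S3) with hw
  have h6 : w ^ 6 = 1 := by rw [← hog]; exact pow_orderOf_eq_one w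
  have h2 : w ^ 2 ≠ 1 := fun h => by
    have := orderOf_dvd_of_pow_eq_one h; rw [hog] at this; omega
  have h3 : w ^ 3 ≠ 1 := fun h => by
    have := orderOf_dvd_of_pow_eq_one h; rw [hog] at this; omega
  obtain ⟨x, hx⟩ := key w h6 h2 h3
  refine ⟨x, ?_⟩
  rw [hH]
  have hmap : Subgroup.map (MulAut.conj x).toMonoidHom (Subgroup.zpowers abcs)
      = Subgroup.zpowers (x * abcs * x⁻¹) := by
    rw [MonoidHom.map_zpowers]; rfl
  rcases hx with hx | hx
  · rw [hmap, abcs_eq, hx]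
  · rw [hmap, abcs_eq]
    rw [← hx]
    have : x * abcs'⁻¹ * x⁻¹ = (x * abcs' * x⁻¹)⁻¹ := by group
    rw [this, Subgroup.zpowers_inv]
end

section
/- Let G be the image of SU(3) in GL₆(ℂ) under A ↦ diag(A, conj(A)). Then the commutant of G in M₆(ℂ) equals the commutant of the image of U(3) under the same embedding (both consist of block scalar matrices diag(u·I₃, v·I₃)); consequently SU(3) does not equal the subgroup of USp(6) fixing its own commutant. -/
open Matrix

/-- The image of `U(3)` in `GL₆(ℂ)` under `A ↦ diag(A, conj A)`. -/
def U3block : Set (Matrix (Fin 3 ⊕ Fin 3) (Fin 3 ⊕ Fin 3) ℂ) :=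
  {M | ∃ A ∈ Matrix.unitaryGroup (Fin 3) ℂ,
    M = Matrix.fromBlocks A 0 0 (A.map (starRingEnd ℂ))}

/-- The image of `SU(3)` in `GL₆(ℂ)` under `A ↦ diag(A, conj A)`. -/
def SU3block : Set (Matrix (Fin 3 ⊕ Fin 3) (Fin 3 ⊕ Fin 3) ℂ) :=
  {M | ∃ A ∈ Matrix.specialUnitaryGroup (Fin 3) ℂ,
    M = Matrix.fromBlocks A 0 0 (A.map (starRingEnd ℂ))}

/-- The matrix of the standard symplectic form. -/
def Jmat : Matrix (Fin 3 ⊕ Fin 3) (Fin 3 ⊕ Fin 3) ℂ :=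
  Matrix.fromBlocks 0 1 (-1) 0

/-- The compact symplectic group `USp(6)` as a set of matrices. -/
def USp6 : Set (Matrix (Fin 3 ⊕ Fin 3) (Fin 3 ⊕ Fin 3) ℂ) :=
  {M | M ∈ Matrix.unitaryGroup (Fin 3 ⊕ Fin 3) ℂ ∧ M.transpose * Jmat * M = Jmat}

namespace Aux9

noncomputable def ω : ℂ := Complex.exp (↑(2 * Real.pi / 3) * Complex.I)

lemma ω_pow3 : ω ^ 3 = 1 := by
  rw [ω, ← Complex.exp_nat_mul]
  rw [show (3 : ℕ) * (↑(2 * Real.pi / 3) * Complex.I) = 2 * (Real.pi : ℂ) * Complex.I by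
    push_cast; ring]
  exact Complex.exp_two_pi_mul_I

lemma ω_im_ne : ω.im ≠ 0 := by
  rw [ω, Complex.exp_ofReal_mul_I_im]
  have h1 : (0:ℝ) < 2 * Real.pi / 3 := by positivity
  have h2 : 2 * Real.pi / 3 < Real.pi := by nlinarith [Real.pi_pos]
  exact ne_of_gt (Real.sin_pos_of_pos_of_lt_pi h1 h2)

lemma ω_ne_conj : ω ≠ (starRingEnd ℂ) ω := by
  intro h
  have := congrArg Complex.im h
  simp [Complex.conj_im] at this
  exact ω_im_ne (by linarith)

lemma conj_ω_mul : (starRingEnd ℂ) ω * ω = 1 := by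
  rw [ω, ← Complex.exp_conj]
  rw [← Complex.exp_add]
  rw [show (starRingEnd ℂ) (↑(2 * Real.pi / 3) * Complex.I) + ↑(2 * Real.pi / 3) * Complex.I
      = 0 by rw [_root_.map_mul, Complex.conj_ofReal, Complex.conj_I]; ring]
  exact Complex.exp_zero

lemma map_smul_one (c : ℂ) :
    ((c • (1 : Matrix (Fin 3) (Fin 3) ℂ)).map (starRingEnd ℂ))
      = (starRingEnd ℂ) c • (1 : Matrix (Fin 3) (Fin 3) ℂ) := by
  ext i j
  by_cases h : i = j <;> simp [Matrix.map_apply, Matrix.one_apply, h]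

lemma smul_one_mem_SU : (ω • (1 : Matrix (Fin 3) (Fin 3) ℂ)) ∈
    Matrix.specialUnitaryGroup (Fin 3) ℂ := by
  rw [Matrix.mem_specialUnitaryGroup_iff]
  constructor
  · rw [Matrix.mem_unitaryGroup_iff']
    rw [star_smul, star_one, smul_mul_assoc, mul_smul_comm, one_mul, smul_smul]
    simp only [Complex.star_def, conj_ω_mul, one_smul]
  · rw [Matrix.det_smul]
    simp [ω_pow3]

lemma conj_unitary {B : Matrix (Fin 3) (Fin 3) ℂ}
    (hB : B ∈ Matrix.unitaryGroup (Fin 3) ℂ) :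
    B.map (starRingEnd ℂ) ∈ Matrix.unitaryGroup (Fin 3) ℂ := by
  rw [Matrix.mem_unitaryGroup_iff'] at hB ⊢
  have hstar : star (B.map (starRingEnd ℂ)) = Bᵀ := by
    ext i j
    simp [Matrix.conjTranspose_apply, Matrix.map_apply]
  rw [hstar]
  have : Bᵀ * B.map (starRingEnd ℂ) = (star B * B).map (starRingEnd ℂ) := by
    ext i j
    simp [Matrix.mul_apply, Matrix.map_apply, Matrix.conjTranspose_apply, map_sum]
  rw [this, hB]
  ext i j
  by_cases h : i = j <;> simp [Matrix.map_apply, Matrix.one_apply, h]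

lemma map_smul' (c : ℂ) (A : Matrix (Fin 3) (Fin 3) ℂ) :
    ((c • A).map (starRingEnd ℂ)) = (starRingEnd ℂ) c • (A.map (starRingEnd ℂ)) := by
  ext i j; simp [Matrix.map_apply]

/-- Block equations for an element of the centralizer. -/
lemma block_eqs {X : Matrix (Fin 3 ⊕ Fin 3) (Fin 3 ⊕ Fin 3) ℂ}
    (hX : X ∈ Subalgebra.centralizer ℂ SU3block)
    {B : Matrix (Fin 3) (Fin 3) ℂ} (hB : B ∈ Matrix.specialUnitaryGroup (Fin 3) ℂ) :
    B * X.toBlocks₁₁ = X.toBlocks₁₁ * B ∧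
    B * X.toBlocks₁₂ = X.toBlocks₁₂ * B.map (starRingEnd ℂ) ∧
    B.map (starRingEnd ℂ) * X.toBlocks₂₁ = X.toBlocks₂₁ * B ∧
    B.map (starRingEnd ℂ) * X.toBlocks₂₂ = X.toBlocks₂₂ * B.map (starRingEnd ℂ) := by
  have h := (Subalgebra.mem_centralizer_iff ℂ).mp hX
    (Matrix.fromBlocks B 0 0 (B.map (starRingEnd ℂ))) ⟨B, hB, rfl⟩
  rw [← Matrix.fromBlocks_toBlocks X, Matrix.fromBlocks_multiply,
    Matrix.fromBlocks_multiply] at h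
  have h11 := congrArg Matrix.toBlocks₁₁ h
  have h12 := congrArg Matrix.toBlocks₁₂ h
  have h21 := congrArg Matrix.toBlocks₂₁ h
  have h22 := congrArg Matrix.toBlocks₂₂ h
  simp only [Matrix.toBlocks_fromBlocks₁₁, Matrix.toBlocks_fromBlocks₁₂,
    Matrix.toBlocks_fromBlocks₂₁, Matrix.toBlocks_fromBlocks₂₂,
    Matrix.zero_mul, Matrix.mul_zero, add_zero, zero_add] at h11 h12 h21 h22
  exact ⟨h11, h12, h21, h22⟩

lemma offdiag_zero {X : Matrix (Fin 3 ⊕ Fin 3) (Fin 3 ⊕ Fin 3) ℂ}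
    (hX : X ∈ Subalgebra.centralizer ℂ SU3block) :
    X.toBlocks₁₂ = 0 ∧ X.toBlocks₂₁ = 0 := by
  obtain ⟨-, h12, h21, -⟩ := block_eqs hX smul_one_mem_SU
  rw [map_smul_one] at h12 h21
  rw [smul_mul_assoc, one_mul, mul_smul_comm, mul_one] at h12 h21
  have key : ω - (starRingEnd ℂ) ω ≠ 0 := sub_ne_zero.mpr ω_ne_conj
  constructor
  · have : (ω - (starRingEnd ℂ) ω) • X.toBlocks₁₂ = 0 := by
      rw [sub_smul, h12, sub_self]
    exact (smul_eq_zero.mp this).resolve_left key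
  · have : (ω - (starRingEnd ℂ) ω) • X.toBlocks₂₁ = 0 := by
      rw [sub_smul, ← h21, sub_self]
    exact (smul_eq_zero.mp this).resolve_left key

end Aux9

open Aux9
theorem stmt_9 :
    Subalgebra.centralizer ℂ SU3block = Subalgebra.centralizer ℂ U3block ∧
      SU3block ≠
        {M | M ∈ USp6 ∧ ∀ X ∈ Subalgebra.centralizer ℂ SU3block, X * M = M * X} := by
  have hsub : SU3block ⊆ U3block := by
    rintro M ⟨A, hA, rfl⟩
    exact ⟨A, ((Matrix.mem_specialUnitaryGroup_iff).mp hA).1, rfl⟩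
  have hcent : Subalgebra.centralizer ℂ SU3block = Subalgebra.centralizer ℂ U3block := by
    apply le_antisymm
    · intro X hX
      rw [Subalgebra.mem_centralizer_iff]
      rintro M ⟨A, hA, rfl⟩
      obtain ⟨hQ, hR⟩ := offdiag_zero hX
      -- cube root of det A
      set lam : ℂ := (A.det) ^ ((3 : ℕ) : ℂ)⁻¹ with hlam_def
      have hlam3 : lam ^ (3 : ℕ) = A.det := Complex.cpow_nat_inv_pow _ (by norm_num)
      have hdet := Matrix.det_of_mem_unitary hA
      have hdet1 : (starRingEnd ℂ) A.det * A.det = 1 := hdet.1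
      have hlam_unit : (starRingEnd ℂ) lam * lam = 1 := by
        have h3 : ((starRingEnd ℂ) lam * lam) ^ 3 = 1 := by
          rw [mul_pow, ← map_pow, hlam3, hdet1]
        have hns : ((Complex.normSq lam : ℝ) : ℂ) = (starRingEnd ℂ) lam * lam := by
          rw [mul_comm, Complex.mul_conj]
        rw [← hns] at h3 ⊢
        have : (Complex.normSq lam) ^ 3 = 1 := by
          have := h3
          rw [← Complex.ofReal_pow] at this
          exact_mod_cast this
        have hnn : 0 ≤ Complex.normSq lam := Complex.normSq_nonneg lam
        have : Complex.normSq lam = 1 := by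
          nlinarith [sq_nonneg (Complex.normSq lam - 1), sq_nonneg (Complex.normSq lam + 1),
            sq_nonneg (Complex.normSq lam)]
        rw [this]; norm_num
      have hlam_ne : lam ≠ 0 := by
        intro h; rw [h] at hlam_unit; simp at hlam_unit
      obtain ⟨B, hB_def⟩ : ∃ B : Matrix (Fin 3) (Fin 3) ℂ, B = lam⁻¹ • A := ⟨_, rfl⟩
      have hBsu : B ∈ Matrix.specialUnitaryGroup (Fin 3) ℂ := by
        rw [Matrix.mem_specialUnitaryGroup_iff]
        constructor
        · rw [Matrix.mem_unitaryGroup_iff']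
          rw [hB_def, star_smul, smul_mul_assoc, mul_smul_comm, smul_smul]
          have hA' : star A * A = 1 := hA.1
          rw [hA']
          have hs : (star lam⁻¹ : ℂ) = ((starRingEnd ℂ) lam)⁻¹ := by
            rw [Complex.star_def, map_inv₀]
          rw [hs, ← mul_inv, hlam_unit, inv_one, one_smul]
        · rw [hB_def, Matrix.det_smul]
          have : A.det ≠ 0 := by
            intro h; rw [h] at hdet1; simp at hdet1
          field_simp [Fintype.card_fin]
          rw [Fintype.card_fin, ← hlam3, div_pow, one_pow, one_div, inv_mul_cancel₀ (pow_ne_zero _ hlam_ne)]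
      have hAB : A = lam • B := by
        rw [hB_def, smul_smul, mul_inv_cancel₀ hlam_ne, one_smul]
      obtain ⟨h11, -, -, h22⟩ := block_eqs hX hBsu
      -- now compute the commutator
      have hXeq : X = Matrix.fromBlocks X.toBlocks₁₁ 0 0 X.toBlocks₂₂ := by
        conv_lhs => rw [← Matrix.fromBlocks_toBlocks X]
        rw [hQ, hR]
      rw [hXeq, Matrix.fromBlocks_multiply, Matrix.fromBlocks_multiply]
      simp only [Matrix.zero_mul, Matrix.mul_zero, add_zero, zero_add, hAB, Aux9.map_smul',
        smul_mul_assoc, mul_smul_comm, h11, h22, smul_zero]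
    · exact Subalgebra.centralizer_le ℂ _ _ hsub
  refine ⟨hcent, ?_⟩
  intro hEq
  -- the matrix diag(i·I, -i·I) is in the RHS but not in SU3block
  set M₀ : Matrix (Fin 3 ⊕ Fin 3) (Fin 3 ⊕ Fin 3) ℂ :=
    Matrix.fromBlocks (Complex.I • 1) 0 0 ((-Complex.I) • 1) with hM₀
  have hM₀_mem : M₀ ∈
      {M | M ∈ USp6 ∧ ∀ X ∈ Subalgebra.centralizer ℂ SU3block, X * M = M * X} := by
    refine ⟨⟨?_, ?_⟩, ?_⟩
    · rw [Matrix.mem_unitaryGroup_iff', Matrix.star_eq_conjTranspose]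
      rw [hM₀, Matrix.fromBlocks_conjTranspose, Matrix.fromBlocks_multiply]
      simp only [Matrix.conjTranspose_zero, Matrix.zero_mul, Matrix.mul_zero,
        add_zero, zero_add]
      have h1 : (Complex.I • (1 : Matrix (Fin 3) (Fin 3) ℂ))ᴴ * (Complex.I • 1) = 1 := by
        rw [Matrix.conjTranspose_smul, Matrix.conjTranspose_one, smul_mul_assoc,
          mul_smul_comm, one_mul, smul_smul]
        simp [Complex.ext_iff]
      have h2 : ((-Complex.I) • (1 : Matrix (Fin 3) (Fin 3) ℂ))ᴴ * ((-Complex.I) • 1) = 1 := by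
        rw [Matrix.conjTranspose_smul, Matrix.conjTranspose_one, smul_mul_assoc,
          mul_smul_comm, one_mul, smul_smul]
        simp [Complex.ext_iff]
      rw [h1, h2, Matrix.fromBlocks_one]
    · have hMT : M₀ᵀ = M₀ := by
        rw [hM₀, Matrix.fromBlocks_transpose]
        simp [Matrix.transpose_smul]
      rw [hMT]
      have hstep : M₀ * Jmat = Matrix.fromBlocks 0 (Complex.I • 1) (Complex.I • 1) 0 := by
        rw [hM₀, Jmat, Matrix.fromBlocks_multiply]
        simp [Matrix.mul_smul, Matrix.smul_mul, mul_neg, neg_neg, neg_smul]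
      rw [hstep, hM₀, Jmat, Matrix.fromBlocks_multiply]
      simp [Matrix.mul_smul, Matrix.smul_mul, smul_smul, Complex.I_mul_I, mul_neg,
        neg_smul, neg_neg]
    · intro X hX
      obtain ⟨hQ, hR⟩ := offdiag_zero hX
      have hXeq : X = Matrix.fromBlocks X.toBlocks₁₁ 0 0 X.toBlocks₂₂ := by
        conv_lhs => rw [← Matrix.fromBlocks_toBlocks X]
        rw [hQ, hR]
      rw [hXeq, hM₀, Matrix.fromBlocks_multiply, Matrix.fromBlocks_multiply]
      simp only [Matrix.zero_mul, Matrix.mul_zero, add_zero, zero_add,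
        smul_mul_assoc, mul_smul_comm, Matrix.mul_one, Matrix.one_mul, smul_zero]
  rw [← hEq] at hM₀_mem
  obtain ⟨B, hB, hBM⟩ := hM₀_mem
  have hB11 : B = Complex.I • 1 := by
    have := congrArg Matrix.toBlocks₁₁ hBM.symm
    simpa [hM₀, Matrix.toBlocks_fromBlocks₁₁] using this
  have hdetB := ((Matrix.mem_specialUnitaryGroup_iff).mp hB).2
  rw [hB11, Matrix.det_smul] at hdetB
  simp [Fintype.card_fin, pow_succ, Complex.ext_iff] at hdetB
end

section
/- Let N be the normalizer in USp(6) of the subgroup G⁰ = {diag(A, conj(A)) : A ∈ U(3)}, where USp(6) is defined with respect to the symplectic form J = (0 I₃; −I₃ 0). Then N = G⁰ ∪ J·G⁰, and hence N/G⁰ is cyclic of order 2. -/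
open Matrix

set_option maxRecDepth 10000

/-- The normalizer of `G⁰` inside `USp(6)`. -/
noncomputable def Normalizer : Set (Matrix (Fin 3 ⊕ Fin 3) (Fin 3 ⊕ Fin 3) ℂ) :=
  {M | M ∈ USp6 ∧ (fun X => M * X * M⁻¹) '' U3block = U3block}

namespace Aux16

abbrev Mat3 := Matrix (Fin 3) (Fin 3) ℂ
abbrev Mat6 := Matrix (Fin 3 ⊕ Fin 3) (Fin 3 ⊕ Fin 3) ℂ

noncomputable def emb (A : Mat3) : Mat6 :=
  Matrix.fromBlocks A 0 0 (A.map (starRingEnd ℂ))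

lemma emb_mul (A B : Mat3) : emb A * emb B = emb (A * B) := by
  simp [emb, fromBlocks_multiply, Matrix.map_mul]

lemma emb_one : emb 1 = 1 := by
  simp [emb, ← fromBlocks_one]

lemma star_emb (A : Mat3) : star (emb A) = emb (star A) := by
  have h : (A.map (starRingEnd ℂ))ᴴ = Aᴴ.map (starRingEnd ℂ) := by
    ext i j; simp [conjTranspose_apply, Matrix.map_apply]
  simp only [emb, Matrix.star_eq_conjTranspose, fromBlocks_conjTranspose, h, conjTranspose_zero]

lemma emb_mem (A : Mat3) (hA : A ∈ Matrix.unitaryGroup (Fin 3) ℂ) : emb A ∈ U3block :=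
  ⟨A, hA, rfl⟩

lemma emb_unitary (A : Mat3) (hA : A ∈ Matrix.unitaryGroup (Fin 3) ℂ) :
    emb A ∈ Matrix.unitaryGroup (Fin 3 ⊕ Fin 3) ℂ := by
  rw [Matrix.mem_unitaryGroup_iff]
  rw [star_emb, emb_mul, (Matrix.mem_unitaryGroup_iff).mp hA, emb_one]

lemma emb_inj {A B : Mat3} (h : emb A = emb B) : A = B := by
  have := congrArg Matrix.toBlocks₁₁ h
  simpa [emb, toBlocks_fromBlocks₁₁] using this

lemma map_star_eq (A : Mat3) : A.map (starRingEnd ℂ) = (star A).transpose := by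
  ext i j; simp [Matrix.map_apply, Matrix.star_eq_conjTranspose, conjTranspose_apply]

lemma emb_symplectic (A : Mat3) (hA : A ∈ Matrix.unitaryGroup (Fin 3) ℂ) :
    (emb A).transpose * Jmat * emb A = Jmat := by
  have h1 : star A * A = 1 := (Matrix.mem_unitaryGroup_iff').mp hA
  have h2 : A * star A = 1 := (Matrix.mem_unitaryGroup_iff).mp hA
  have e1 : A.transpose * A.map (starRingEnd ℂ) = 1 := by
    rw [map_star_eq, ← transpose_mul, h1, transpose_one]
  have e2 : (A.map (starRingEnd ℂ)).transpose * A = 1 := by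
    rw [map_star_eq, transpose_transpose]
    exact h1
  simp only [emb, Jmat, fromBlocks_transpose, fromBlocks_multiply]
  simp [e1, e2]

lemma emb_USp6 (A : Mat3) (hA : A ∈ Matrix.unitaryGroup (Fin 3) ℂ) : emb A ∈ USp6 :=
  ⟨emb_unitary A hA, emb_symplectic A hA⟩

lemma Jmat_transpose : Jmat.transpose = -Jmat := by
  rw [Jmat, fromBlocks_transpose, fromBlocks_neg]
  norm_num

lemma Jmat_mul_Jmat : Jmat * Jmat = -1 := by
  have h : (-1 : Mat6) = fromBlocks (-1) 0 0 (-1) := by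
    ext i j
    rcases i with a | a <;> rcases j with b | b <;>
      simp [fromBlocks, Matrix.one_apply, Matrix.neg_apply]
  rw [h, Jmat, fromBlocks_multiply]
  norm_num

lemma Jmat_star : star Jmat = -Jmat := by
  have : star Jmat = Jmat.transpose := by
    ext i j
    simp only [Matrix.star_eq_conjTranspose, conjTranspose_apply, transpose_apply]
    rcases j with a | a <;> rcases i with b | b <;>
      simp [Jmat, fromBlocks, Matrix.one_apply]
  rw [this, Jmat_transpose]

lemma Jmat_unitary : Jmat ∈ Matrix.unitaryGroup (Fin 3 ⊕ Fin 3) ℂ := by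
  rw [Matrix.mem_unitaryGroup_iff, Jmat_star]
  rw [mul_neg, Jmat_mul_Jmat, neg_neg]

lemma Jmat_USp6 : Jmat ∈ USp6 := by
  refine ⟨Jmat_unitary, ?_⟩
  rw [Jmat_transpose, neg_mul, Jmat_mul_Jmat, neg_neg, one_mul]

lemma Jmat_inv : Jmat⁻¹ = -Jmat := by
  apply Matrix.inv_eq_left_inv
  rw [neg_mul, Jmat_mul_Jmat, neg_neg]


lemma emb_inv (A : Mat3) (hA : A ∈ Matrix.unitaryGroup (Fin 3) ℂ) :
    (emb A)⁻¹ = emb (star A) := by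
  apply Matrix.inv_eq_left_inv
  rw [emb_mul, (Matrix.mem_unitaryGroup_iff').mp hA, emb_one]

lemma USp6_mul {M N' : Mat6} (hM : M ∈ USp6) (hN : N' ∈ USp6) : M * N' ∈ USp6 := by
  refine ⟨mul_mem hM.1 hN.1, ?_⟩
  rw [transpose_mul]
  calc N'.transpose * M.transpose * Jmat * (M * N')
      = N'.transpose * (M.transpose * Jmat * M) * N' := by noncomm_ring
    _ = Jmat := by rw [hM.2]; exact hN.2

lemma conj_emb_mem {A : Mat3} (hA : A ∈ Matrix.unitaryGroup (Fin 3) ℂ)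
    {X : Mat6} (hX : X ∈ U3block) : emb A * X * (emb A)⁻¹ ∈ U3block := by
  obtain ⟨C, hC, rfl⟩ := hX
  rw [show Matrix.fromBlocks C 0 0 (C.map (starRingEnd ℂ)) = emb C from rfl,
    emb_inv A hA, emb_mul, emb_mul]
  exact emb_mem _ (mul_mem (mul_mem hA hC) (Unitary.star_mem hA))

lemma conj_J_emb (C : Mat3) :
    Jmat * emb C * Jmat⁻¹ = emb (C.map (starRingEnd ℂ)) := by
  rw [Jmat_inv]
  have hmapmap : (C.map (starRingEnd ℂ)).map (starRingEnd ℂ) = C := by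
    ext i j; simp [Matrix.map_apply]
  simp only [emb, Jmat, hmapmap, mul_neg, fromBlocks_multiply, fromBlocks_neg]
  norm_num

lemma map_star_unitary {C : Mat3} (hC : C ∈ Matrix.unitaryGroup (Fin 3) ℂ) :
    C.map (starRingEnd ℂ) ∈ Matrix.unitaryGroup (Fin 3) ℂ := by
  have h1 : star (C.map (starRingEnd ℂ)) = C.transpose := by
    ext i j
    simp [Matrix.star_eq_conjTranspose, conjTranspose_apply, Matrix.map_apply]
  have h2 : C.map (starRingEnd ℂ) * C.transpose = (C * star C).transpose := by
    rw [transpose_mul, map_star_eq]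
  rw [Matrix.mem_unitaryGroup_iff, h1, h2, (Matrix.mem_unitaryGroup_iff).mp hC,
    transpose_one]

lemma conj_J_mem {X : Mat6} (hX : X ∈ U3block) : Jmat * X * Jmat⁻¹ ∈ U3block := by
  obtain ⟨C, hC, rfl⟩ := hX
  rw [show Matrix.fromBlocks C 0 0 (C.map (starRingEnd ℂ)) = emb C from rfl, conj_J_emb]
  exact emb_mem _ (map_star_unitary hC)

lemma image_eq_of {M : Mat6} (h1 : M⁻¹ * M = 1) (h1' : M * M⁻¹ = 1)
    (hc : ∀ X ∈ U3block, M * X * M⁻¹ ∈ U3block)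
    (hc' : ∀ X ∈ U3block, M⁻¹ * X * M ∈ U3block) :
    (fun X => M * X * M⁻¹) '' U3block = U3block := by
  apply Set.Subset.antisymm
  · rintro _ ⟨X, hX, rfl⟩; exact hc X hX
  · intro Y hY
    refine ⟨M⁻¹ * Y * M, hc' Y hY, ?_⟩
    simp only
    calc M * (M⁻¹ * Y * M) * M⁻¹ = (M * M⁻¹) * Y * (M * M⁻¹) := by noncomm_ring
      _ = Y := by rw [h1', one_mul, mul_one]

lemma inv_of_unitary {M : Mat6} (h : M ∈ Matrix.unitaryGroup (Fin 3 ⊕ Fin 3) ℂ) :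
    M⁻¹ = star M :=
  Matrix.inv_eq_left_inv ((Matrix.mem_unitaryGroup_iff').mp h)

lemma inv_mul_unitary {M : Mat6} (h : M ∈ Matrix.unitaryGroup (Fin 3 ⊕ Fin 3) ℂ) :
    M⁻¹ * M = 1 := by
  rw [inv_of_unitary h]; exact (Matrix.mem_unitaryGroup_iff').mp h

lemma mul_inv_unitary {M : Mat6} (h : M ∈ Matrix.unitaryGroup (Fin 3 ⊕ Fin 3) ℂ) :
    M * M⁻¹ = 1 := by
  rw [inv_of_unitary h]; exact (Matrix.mem_unitaryGroup_iff).mp h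

lemma conj_conj (M N' X : Mat6) :
    (M * N') * X * (M * N')⁻¹ = M * (N' * X * N'⁻¹) * M⁻¹ := by
  rw [Matrix.mul_inv_rev]; noncomm_ring

lemma emb_inv_inv {A : Mat3} (hA : A ∈ Matrix.unitaryGroup (Fin 3) ℂ) :
    ((emb A)⁻¹)⁻¹ = emb A := by
  rw [emb_inv A hA, emb_inv (star A) (Unitary.star_mem hA), star_star]

lemma conj_emb_inv_mem {A : Mat3} (hA : A ∈ Matrix.unitaryGroup (Fin 3) ℂ)
    {X : Mat6} (hX : X ∈ U3block) : (emb A)⁻¹ * X * ((emb A)⁻¹)⁻¹ ∈ U3block := by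
  have e1 : (emb A)⁻¹ = emb (star A) := emb_inv A hA
  rw [e1]
  exact conj_emb_mem (A := star A) (Unitary.star_mem hA) hX

lemma Jmat_inv_inv : (Jmat⁻¹)⁻¹ = Jmat := by
  rw [Jmat_inv]
  apply Matrix.inv_eq_left_inv
  rw [mul_neg, Jmat_mul_Jmat, neg_neg]

lemma conj_J_inv_mem {X : Mat6} (hX : X ∈ U3block) :
    Jmat⁻¹ * X * (Jmat⁻¹)⁻¹ ∈ U3block := by
  rw [Jmat_inv_inv, show Jmat⁻¹ * X * Jmat = Jmat * X * Jmat⁻¹ by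
    rw [Jmat_inv]; noncomm_ring]
  exact conj_J_mem hX

lemma emb_mem_normalizer {A : Mat3} (hA : A ∈ Matrix.unitaryGroup (Fin 3) ℂ) :
    emb A ∈ Normalizer := by
  refine ⟨emb_USp6 A hA, ?_⟩
  refine image_eq_of (inv_mul_unitary (emb_unitary A hA))
    (mul_inv_unitary (emb_unitary A hA)) (fun X hX => conj_emb_mem hA hX)
    (fun X hX => ?_)
  have := conj_emb_inv_mem hA hX
  rwa [emb_inv_inv hA] at this

lemma J_emb_mem_normalizer {A : Mat3} (hA : A ∈ Matrix.unitaryGroup (Fin 3) ℂ) :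
    Jmat * emb A ∈ Normalizer := by
  have hu : Jmat * emb A ∈ Matrix.unitaryGroup (Fin 3 ⊕ Fin 3) ℂ :=
    mul_mem Jmat_unitary (emb_unitary A hA)
  refine ⟨USp6_mul Jmat_USp6 (emb_USp6 A hA), ?_⟩
  refine image_eq_of (inv_mul_unitary hu) (mul_inv_unitary hu) (fun X hX => ?_)
    (fun X hX => ?_)
  · rw [conj_conj]
    exact conj_J_mem (conj_emb_mem hA hX)
  · rw [Matrix.mul_inv_rev,
      show (emb A)⁻¹ * Jmat⁻¹ * X * (Jmat * emb A)
         = (emb A)⁻¹ * (Jmat⁻¹ * X * (Jmat⁻¹)⁻¹) * ((emb A)⁻¹)⁻¹ by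
        rw [Jmat_inv_inv, emb_inv_inv hA]; noncomm_ring]
    exact conj_emb_inv_mem hA (conj_J_inv_mem hX)


noncomputable def vvec : Fin 3 → ℂ := ![1, Complex.I, -1]

noncomputable def Vmat : Mat3 := Matrix.diagonal vvec

def Wmat : Mat3 := !![0,1,0;0,0,1;1,0,0]

lemma vvec_inj : Function.Injective vvec := by
  intro i j h
  fin_cases i <;> fin_cases j <;> first
    | rfl
    | (exfalso; norm_num [vvec, Complex.ext_iff] at h)

lemma Vmat_unitary : Vmat ∈ Matrix.unitaryGroup (Fin 3) ℂ := by
  rw [Matrix.mem_unitaryGroup_iff]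
  have h : (fun i => vvec i * star (vvec i)) = (1 : Fin 3 → ℂ) := by
    funext i
    fin_cases i <;> norm_num [vvec, Complex.ext_iff, Complex.star_def]
  rw [Vmat, Matrix.star_eq_conjTranspose, Matrix.diagonal_conjTranspose,
    Matrix.diagonal_mul_diagonal]
  rw [show (fun i => vvec i * Star.star vvec i) = (1 : Fin 3 → ℂ) from h]
  exact Matrix.diagonal_one

lemma Wmat_unitary : Wmat ∈ Matrix.unitaryGroup (Fin 3) ℂ := by
  rw [Matrix.mem_unitaryGroup_iff]
  ext i j
  fin_cases i <;> fin_cases j <;>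
    simp [Wmat, Matrix.mul_apply, Fin.sum_univ_three, Matrix.star_eq_conjTranspose,
      conjTranspose_apply, Matrix.one_apply]

lemma offdiag_zero {B : Mat3} (h : B * Vmat = Vmat * B) {i j : Fin 3} (hij : i ≠ j) :
    B i j = 0 := by
  have h' := congrFun (congrFun h i) j
  rw [Vmat, Matrix.mul_diagonal, Matrix.diagonal_mul] at h'
  have hv : vvec j ≠ vvec i := fun hc => hij (vvec_inj hc).symm
  have : B i j * (vvec j - vvec i) = 0 := by ring_nf; linear_combination h'
  rcases mul_eq_zero.mp this with h0 | h0
  · exact h0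
  · exact absurd (sub_eq_zero.mp h0) hv

lemma scalar_of_commutes {B : Mat3} (hV : B * Vmat = Vmat * B) (hW : B * Wmat = Wmat * B) :
    B = B 0 0 • 1 := by
  have h01 : B 0 0 = B 1 1 := by
    have h' := congrFun (congrFun hW 0) 1
    simp [Wmat, Matrix.mul_apply, Fin.sum_univ_three,
      offdiag_zero hV (show (0:Fin 3) ≠ 2 by decide),
      offdiag_zero hV (show (0:Fin 3) ≠ 1 by decide)] at h'
    exact h'
  have h12 : B 1 1 = B 2 2 := by
    have h' := congrFun (congrFun hW 1) 2
    simp [Wmat, Matrix.mul_apply, Fin.sum_univ_three,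
      offdiag_zero hV (show (1:Fin 3) ≠ 0 by decide),
      offdiag_zero hV (show (1:Fin 3) ≠ 2 by decide)] at h'
    exact h'
  ext i j
  by_cases hij : i = j
  · subst hij
    fin_cases i <;> simp [Matrix.smul_apply, Matrix.one_apply]
    · exact h01.symm
    · exact (h01.trans h12).symm
  · simp [Matrix.smul_apply, Matrix.one_apply, hij, offdiag_zero hV hij]

noncomputable def Dmat : Mat6 := emb (Complex.I • 1)

lemma smul_one_map :
    ((Complex.I • 1 : Mat3)).map (starRingEnd ℂ) = (-Complex.I) • 1 := by
  ext i j
  simp [Matrix.map_apply, Matrix.smul_apply, Matrix.one_apply, apply_ite, Complex.conj_I]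

lemma Dmat_eq : Dmat = Matrix.fromBlocks (Complex.I • 1) 0 0 ((-Complex.I) • 1) := by
  rw [Dmat, emb, smul_one_map]

lemma smul_one_unitary {z : ℂ} (hz : star z * z = 1) :
    z • (1 : Mat3) ∈ Matrix.unitaryGroup (Fin 3) ℂ := by
  rw [Matrix.mem_unitaryGroup_iff']
  rw [star_smul, star_one, Matrix.smul_mul, Matrix.mul_smul, smul_smul, one_mul, hz, one_smul]

lemma Dmat_mem : Dmat ∈ U3block :=
  emb_mem _ (smul_one_unitary (by simp [Complex.star_def, Complex.conj_I]))

lemma two_I_ne : (2 * Complex.I : ℂ) ≠ 0 := by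
  simp [Complex.ext_iff]

lemma blockdiag_of_commute {M : Mat6}
    (hu : M ∈ Matrix.unitaryGroup (Fin 3 ⊕ Fin 3) ℂ)
    (hs : M.transpose * Jmat * M = Jmat)
    (hcomm : M * Dmat = Dmat * M) : M ∈ U3block := by
  set P := M.toBlocks₁₁ with hP
  set Q := M.toBlocks₁₂ with hQ
  set R := M.toBlocks₂₁ with hR
  set S := M.toBlocks₂₂ with hS
  have hM : M = Matrix.fromBlocks P Q R S := (fromBlocks_toBlocks M).symm
  -- off-diagonal blocks vanish
  have hcomm' : Matrix.fromBlocks (Complex.I • P) ((-Complex.I) • Q)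
      (Complex.I • R) ((-Complex.I) • S)
      = Matrix.fromBlocks (Complex.I • P) (Complex.I • Q)
      ((-Complex.I) • R) ((-Complex.I) • S) := by
    have := hcomm
    rw [hM, Dmat_eq, fromBlocks_multiply, fromBlocks_multiply] at this
    simpa [Matrix.mul_smul, Matrix.smul_mul] using this
  have hQ0 : Q = 0 := by
    have h12 := congrArg Matrix.toBlocks₁₂ hcomm'
    simp only [toBlocks_fromBlocks₁₂] at h12
    have : (2 * Complex.I) • Q = 0 := by
      have := sub_eq_zero_of_eq h12.symm
      rw [← sub_smul] at this
      convert this using 2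
      ring
    exact (smul_eq_zero.mp this).resolve_left two_I_ne
  have hR0 : R = 0 := by
    have h21 := congrArg Matrix.toBlocks₂₁ hcomm'
    simp only [toBlocks_fromBlocks₂₁] at h21
    have : (2 * Complex.I) • R = 0 := by
      have := sub_eq_zero_of_eq h21
      rw [← sub_smul] at this
      convert this using 2
      ring
    exact (smul_eq_zero.mp this).resolve_left two_I_ne
  rw [hQ0, hR0] at hM
  -- P is unitary
  have hmul : M * star M = 1 := (Matrix.mem_unitaryGroup_iff).mp hu
  have hstarM : star M = Matrix.fromBlocks (star P) 0 0 (star S) := by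
    rw [hM, Matrix.star_eq_conjTranspose, fromBlocks_conjTranspose, conjTranspose_zero]
    rfl
  have hPu : P * star P = 1 := by
    have := hmul
    rw [hstarM, hM, fromBlocks_multiply] at this
    have h11 := congrArg Matrix.toBlocks₁₁ this
    simpa [← fromBlocks_one, toBlocks_fromBlocks₁₁] using h11
  have hPmem : P ∈ Matrix.unitaryGroup (Fin 3) ℂ := (Matrix.mem_unitaryGroup_iff).mpr hPu
  -- symplectic condition gives Pᵀ * S = 1
  have hPS : P.transpose * S = 1 := by
    have := hs
    rw [hM, Jmat, fromBlocks_transpose, fromBlocks_multiply, fromBlocks_multiply] at this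
    have h12 := congrArg Matrix.toBlocks₁₂ this
    simpa [toBlocks_fromBlocks₁₂] using h12
  -- S = conj P
  have hPm : P.map (starRingEnd ℂ) * P.transpose = 1 := by
    rw [map_star_eq, ← transpose_mul, hPu, transpose_one]
  have hSP : S = P.map (starRingEnd ℂ) := by
    calc S = (P.map (starRingEnd ℂ) * P.transpose) * S := by rw [hPm, one_mul]
      _ = P.map (starRingEnd ℂ) * (P.transpose * S) := by rw [mul_assoc]
      _ = P.map (starRingEnd ℂ) := by rw [hPS, mul_one]
  rw [hSP] at hM
  exact ⟨P, hPmem, hM⟩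

lemma smul_one_map' (z : ℂ) :
    ((z • 1 : Mat3)).map (starRingEnd ℂ) = (star z) • 1 := by
  ext i j
  by_cases h : i = j <;> simp [Matrix.map_apply, Matrix.smul_apply, Matrix.one_apply, h]

lemma trace_fromBlocks (A B C D : Mat3) :
    (Matrix.fromBlocks A B C D).trace = A.trace + D.trace := by
  simp [Matrix.trace, Matrix.diag, Fintype.sum_sum_type, fromBlocks]

lemma trace_Dmat : Dmat.trace = 0 := by
  rw [Dmat_eq, trace_fromBlocks, Matrix.trace_smul, Matrix.trace_smul]
  simp

lemma Dmat_comm_smul (C : Mat3) : Dmat * emb C = emb C * Dmat := by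
  rw [Dmat, emb_mul, emb_mul]
  congr 1
  rw [Matrix.smul_mul, Matrix.mul_smul, one_mul, mul_one]

lemma JD_anticomm : Jmat * Dmat = -(Dmat * Jmat) := by
  rw [Dmat_eq, Jmat, fromBlocks_multiply, fromBlocks_multiply, fromBlocks_neg]
  norm_num

lemma Jinv_USp6 : Jmat⁻¹ ∈ USp6 := by
  rw [Jmat_inv]
  constructor
  · rw [Matrix.mem_unitaryGroup_iff, star_neg, neg_mul_neg]
    exact (Matrix.mem_unitaryGroup_iff).mp Jmat_unitary
  · rw [transpose_neg, neg_mul, neg_mul_neg]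
    exact Jmat_USp6.2

lemma z_cases {z : ℂ} (h1 : star z * z = 1) (h2 : z + star z = 0) :
    z = Complex.I ∨ z = -Complex.I := by
  have hre : z.re = 0 := by
    have := congrArg Complex.re h2
    simp [Complex.star_def, Complex.add_re, Complex.conj_re] at this
    linarith
  have him : z.im ^ 2 = 1 := by
    have := congrArg Complex.re h1
    simp [Complex.star_def, Complex.mul_re, Complex.conj_re, Complex.conj_im, hre] at this
    nlinarith
  have : (z.im - 1) * (z.im + 1) = 0 := by nlinarith
  rcases mul_eq_zero.mp this with h | h
  · left
    apply Complex.ext <;> simp [hre, Complex.I_re, Complex.I_im] <;> linarith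
  · right
    apply Complex.ext <;>
      simp [hre, Complex.I_re, Complex.I_im, Complex.neg_re, Complex.neg_im] <;> linarith

lemma neg_one_fromBlocks : (-1 : Mat6) = Matrix.fromBlocks (-1) 0 0 (-1) := by
  ext i j
  rcases i with a | a <;> rcases j with b | b <;>
    simp [fromBlocks, Matrix.one_apply, Matrix.neg_apply]

lemma emb_neg_Dmat : emb ((-Complex.I) • 1) = -Dmat := by
  rw [emb, smul_one_map', Dmat_eq]
  rw [fromBlocks_neg]
  norm_num [Complex.star_def, Complex.conj_I]

lemma forward {M : Mat6} (hM : M ∈ Normalizer) :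
    M ∈ U3block ∪ (fun X => Jmat * X) '' U3block := by
  obtain ⟨⟨hu, hs⟩, himg⟩ := hM
  have hinvM : M⁻¹ * M = 1 := inv_mul_unitary hu
  have hMinv : M * M⁻¹ = 1 := mul_inv_unitary hu
  have hD : M * Dmat * M⁻¹ ∈ U3block := by
    rw [← himg]; exact ⟨Dmat, Dmat_mem, rfl⟩
  obtain ⟨B, hB, hMD⟩ := hD
  have hMD : M * Dmat * M⁻¹ = emb B := hMD
  have hBcomm : ∀ A : Mat3, A ∈ Matrix.unitaryGroup (Fin 3) ℂ → B * A = A * B := by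
    intro A hA
    have hmem : emb A ∈ (fun X => M * X * M⁻¹) '' U3block := by
      rw [himg]; exact emb_mem A hA
    obtain ⟨X, hX, hXA⟩ := hmem
    obtain ⟨C, hC, rfl⟩ := hX
    have hXA : M * emb C * M⁻¹ = emb A := hXA
    have key : emb B * emb A = emb A * emb B := by
      rw [← hMD, ← hXA]
      calc (M * Dmat * M⁻¹) * (M * emb C * M⁻¹)
          = M * (Dmat * (M⁻¹ * M) * emb C) * M⁻¹ := by noncomm_ring
        _ = M * (Dmat * emb C) * M⁻¹ := by rw [hinvM]; noncomm_ring
        _ = M * (emb C * Dmat) * M⁻¹ := by rw [Dmat_comm_smul]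
        _ = M * (emb C * (M⁻¹ * M) * Dmat) * M⁻¹ := by rw [hinvM]; noncomm_ring
        _ = (M * emb C * M⁻¹) * (M * Dmat * M⁻¹) := by noncomm_ring
    apply emb_inj
    rw [← emb_mul, ← emb_mul, key]
  have hBz : B = B 0 0 • 1 :=
    scalar_of_commutes (hBcomm Vmat Vmat_unitary) (hBcomm Wmat Wmat_unitary)
  set z := B 0 0 with hz
  have hz1 : star z * z = 1 := by
    have h := (Matrix.mem_unitaryGroup_iff').mp hB
    rw [hBz, star_smul, star_one, Matrix.smul_mul, Matrix.mul_smul, smul_smul, one_mul] at h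
    have := congrFun (congrFun h 0) 0
    simpa [Matrix.smul_apply, Matrix.one_apply] using this
  have htr : z + star z = 0 := by
    have t1 : (M * Dmat * M⁻¹).trace = Dmat.trace := by
      rw [Matrix.trace_mul_comm (M * Dmat) M⁻¹, ← mul_assoc, hinvM, one_mul]
    have t2 : (emb B).trace = 3 * z + 3 * star z := by
      rw [emb, trace_fromBlocks, hBz, smul_one_map', Matrix.trace_smul,
        Matrix.trace_smul, Matrix.trace_one, smul_eq_mul, smul_eq_mul]
      simp only [Fintype.card_fin]
      push_cast
      ring
    have := t1.symm.trans (congrArg Matrix.trace hMD)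
    rw [t2, trace_Dmat] at this
    have h3 : (3 : ℂ) * (z + star z) = 0 := by linear_combination -this
    have : (3 : ℂ) ≠ 0 := by norm_num
    exact (mul_eq_zero.mp h3).resolve_left this
  rcases z_cases hz1 htr with hzI | hzI
  · left
    apply blockdiag_of_commute hu hs
    have : M * Dmat * M⁻¹ = Dmat := by
      rw [hMD, hBz, hzI]; rfl
    calc M * Dmat = M * Dmat * (M⁻¹ * M) := by rw [hinvM, mul_one]
      _ = (M * Dmat * M⁻¹) * M := by noncomm_ring
      _ = Dmat * M := by rw [this]
  · right
    have hanti : M * Dmat = -(Dmat * M) := by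
      have h1 : M * Dmat * M⁻¹ = -Dmat := by
        rw [hMD, hBz, hzI, emb_neg_Dmat]
      calc M * Dmat = M * Dmat * (M⁻¹ * M) := by rw [hinvM, mul_one]
        _ = (M * Dmat * M⁻¹) * M := by noncomm_ring
        _ = -Dmat * M := by rw [h1]
        _ = -(Dmat * M) := by noncomm_ring
    set M' := Jmat⁻¹ * M with hM'
    have hM'u : M' ∈ Matrix.unitaryGroup (Fin 3 ⊕ Fin 3) ℂ :=
      mul_mem Jinv_USp6.1 hu
    have hM's : M'.transpose * Jmat * M' = Jmat := (USp6_mul Jinv_USp6 ⟨hu, hs⟩).2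
    have hJinvD : Jmat⁻¹ * Dmat = Dmat * Jmat := by
      rw [Jmat_inv]
      calc -Jmat * Dmat = -(Jmat * Dmat) := by noncomm_ring
        _ = Dmat * Jmat := by rw [JD_anticomm, neg_neg]
    have hM'comm : M' * Dmat = Dmat * M' := by
      calc M' * Dmat = Jmat⁻¹ * (M * Dmat) := by rw [hM']; noncomm_ring
        _ = Jmat⁻¹ * (-(Dmat * M)) := by rw [hanti]
        _ = -((Jmat⁻¹ * Dmat) * M) := by noncomm_ring
        _ = -((Dmat * Jmat) * M) := by rw [hJinvD]
        _ = Dmat * (-Jmat * M) := by noncomm_ring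
        _ = Dmat * M' := by rw [hM', Jmat_inv]
    have hM'U3 : M' ∈ U3block := blockdiag_of_commute hM'u hM's hM'comm
    refine ⟨M', hM'U3, ?_⟩
    simp only [hM']
    rw [← mul_assoc, show Jmat * Jmat⁻¹ = 1 by
      rw [Jmat_inv, mul_neg, Jmat_mul_Jmat, neg_neg], one_mul]

end Aux16

theorem stmt_16 :
    Normalizer = U3block ∪ (fun X => Jmat * X) '' U3block ∧
      Jmat ∉ U3block ∧ Jmat * Jmat ∈ U3block := by
  refine ⟨?_, ?_, ?_⟩
  · apply Set.Subset.antisymm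
    · intro M hM
      exact Aux16.forward hM
    · rintro M (⟨A, hA, rfl⟩ | ⟨X, ⟨A, hA, rfl⟩, rfl⟩)
      · exact Aux16.emb_mem_normalizer hA
      · exact Aux16.J_emb_mem_normalizer hA
  · rintro ⟨A, hA, h⟩
    have h' := congrFun (congrFun h (Sum.inl 0)) (Sum.inr 0)
    simp [Jmat, Matrix.fromBlocks, Matrix.one_apply] at h'
  · refine ⟨-1, ?_, ?_⟩
    · rw [Matrix.mem_unitaryGroup_iff]
      simp
    · have hm : ((-1 : Aux16.Mat3)).map (starRingEnd ℂ) = -1 := by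
        ext i j
        by_cases h : i = j <;>
          simp [Matrix.map_apply, Matrix.one_apply, Matrix.neg_apply, h]
      rw [Aux16.Jmat_mul_Jmat, Aux16.neg_one_fromBlocks, hm]
end
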